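/- Let A be an M×N quaternion matrix with A = A_h + A_v·j. If A is a perfect quaternion array (R_A(m,n) = 0 for all (m,n) ≠ (0,0)), then the conjugate-free periodic cross-correlations commute: A_v ⋆ A_h = A_h ⋆ A_v. -/

import Mathlib

noncomputable section
open scoped BigOperators

def cq (z : ℂ) : Quaternion ℝ := ⟨z.re, z.im, 0, 0⟩
def qi : Quaternion ℝ := ⟨0, 1, 0, 0⟩
def qj : Quaternion ℝ := ⟨0, 0, 1, 0⟩
def qk : Quaternion ℝ := ⟨0, 0, 0, 1⟩

def qcorr {M N : ℕ} [NeZero M] [NeZero N]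
    (X Y : Matrix (ZMod M) (ZMod N) (Quaternion ℝ)) :
    Matrix (ZMod M) (ZMod N) (Quaternion ℝ) :=
  fun m n => ∑ k, ∑ l, X k l * Y (k + m) (l + n)

def Rq {M N : ℕ} [NeZero M] [NeZero N]
    (A : Matrix (ZMod M) (ZMod N) (Quaternion ℝ)) :
    Matrix (ZMod M) (ZMod N) (Quaternion ℝ) :=
  qcorr A (fun k l => star (A k l))

def ccorr {M N : ℕ} [NeZero M] [NeZero N]
    (X Y : Matrix (ZMod M) (ZMod N) ℂ) : Matrix (ZMod M) (ZMod N) ℂ :=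
  fun m n => ∑ k, ∑ l, X k l * Y (k + m) (l + n)

def Rc {M N : ℕ} [NeZero M] [NeZero N]
    (A : Matrix (ZMod M) (ZMod N) ℂ) : Matrix (ZMod M) (ZMod N) ℂ :=
  ccorr A (fun k l => star (A k l))

lemma star_term (c d : ℂ) : star (cq c + cq d * qj) = cq (star c) - cq d * qj := by
  ext <;> simp only [Quaternion.re_add, Quaternion.imI_add, Quaternion.imJ_add, Quaternion.imK_add, Quaternion.re_sub, Quaternion.imI_sub, Quaternion.imJ_sub, Quaternion.imK_sub, Quaternion.re_mul, Quaternion.imI_mul, Quaternion.imJ_mul, Quaternion.imK_mul, Quaternion.re_star, Quaternion.imI_star, Quaternion.imJ_star, Quaternion.imK_star, Quaternion.re_zero, Quaternion.imI_zero, Quaternion.imJ_zero, Quaternion.imK_zero] <;> simp [cq, qj, Quaternion.ext_iff]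

lemma term (a b c d : ℂ) :
    (cq a + cq b * qj) * (cq (star c) - cq d * qj)
      = cq (a * star c + b * star d) + cq (b * c - a * d) * qj := by
  ext <;> simp only [Quaternion.re_add, Quaternion.imI_add, Quaternion.imJ_add, Quaternion.imK_add, Quaternion.re_sub, Quaternion.imI_sub, Quaternion.imJ_sub, Quaternion.imK_sub, Quaternion.re_mul, Quaternion.imI_mul, Quaternion.imJ_mul, Quaternion.imK_mul, Quaternion.re_star, Quaternion.imI_star, Quaternion.imJ_star, Quaternion.imK_star, Quaternion.re_zero, Quaternion.imI_zero, Quaternion.imJ_zero, Quaternion.imK_zero] <;> simp [cq, qj, Complex.ext_iff] <;> ring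

def cqHom : ℂ →+ Quaternion ℝ where
  toFun := cq
  map_zero' := by ext <;> simp only [Quaternion.re_add, Quaternion.imI_add, Quaternion.imJ_add, Quaternion.imK_add, Quaternion.re_sub, Quaternion.imI_sub, Quaternion.imJ_sub, Quaternion.imK_sub, Quaternion.re_mul, Quaternion.imI_mul, Quaternion.imJ_mul, Quaternion.imK_mul, Quaternion.re_star, Quaternion.imI_star, Quaternion.imJ_star, Quaternion.imK_star, Quaternion.re_zero, Quaternion.imI_zero, Quaternion.imJ_zero, Quaternion.imK_zero] <;> simp [cq]
  map_add' := by intro x y; ext <;> simp only [Quaternion.re_add, Quaternion.imI_add, Quaternion.imJ_add, Quaternion.imK_add, Quaternion.re_sub, Quaternion.imI_sub, Quaternion.imJ_sub, Quaternion.imK_sub, Quaternion.re_mul, Quaternion.imI_mul, Quaternion.imJ_mul, Quaternion.imK_mul, Quaternion.re_star, Quaternion.imI_star, Quaternion.imJ_star, Quaternion.imK_star, Quaternion.re_zero, Quaternion.imI_zero, Quaternion.imJ_zero, Quaternion.imK_zero] <;> simp [cq]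

lemma cq_add (x y : ℂ) : cq (x + y) = cq x + cq y := by ext <;> simp only [Quaternion.re_add, Quaternion.imI_add, Quaternion.imJ_add, Quaternion.imK_add, Quaternion.re_sub, Quaternion.imI_sub, Quaternion.imJ_sub, Quaternion.imK_sub, Quaternion.re_mul, Quaternion.imI_mul, Quaternion.imJ_mul, Quaternion.imK_mul, Quaternion.re_star, Quaternion.imI_star, Quaternion.imJ_star, Quaternion.imK_star, Quaternion.re_zero, Quaternion.imI_zero, Quaternion.imJ_zero, Quaternion.imK_zero] <;> simp [cq]

lemma cq_sum {ι : Type*} (s : Finset ι) (f : ι → ℂ) :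
    cq (∑ i ∈ s, f i) = ∑ i ∈ s, cq (f i) := map_sum cqHom f s

lemma cq_j_components (P Q : ℂ) (h : cq P + cq Q * qj = 0) : Q = 0 := by
  have hJ := congrArg QuaternionAlgebra.imJ h
  have hK := congrArg QuaternionAlgebra.imK h
  simp only [Quaternion.re_add, Quaternion.imI_add, Quaternion.imJ_add, Quaternion.imK_add, Quaternion.re_sub, Quaternion.imI_sub, Quaternion.imJ_sub, Quaternion.imK_sub, Quaternion.re_mul, Quaternion.imI_mul, Quaternion.imJ_mul, Quaternion.imK_mul, Quaternion.re_star, Quaternion.imI_star, Quaternion.imJ_star, Quaternion.imK_star, Quaternion.re_zero, Quaternion.imI_zero, Quaternion.imJ_zero, Quaternion.imK_zero] at hJ hK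
  simp [cq, qj] at hJ hK
  exact Complex.ext hJ hK

theorem pqa_components_cross_correlations_commute {M N : ℕ} [NeZero M] [NeZero N]
    (Ah Av : Matrix (ZMod M) (ZMod N) ℂ)
    (A : Matrix (ZMod M) (ZMod N) (Quaternion ℝ))
    (hA : ∀ k l, A k l = cq (Ah k l) + cq (Av k l) * qj)
    (hperf : ∀ m n, (m, n) ≠ (0, 0) → Rq A m n = 0) :
    ccorr Av Ah = ccorr Ah Av := by
  funext m n
  by_cases h : (m, n) = (0, 0)
  · obtain ⟨hm, hn⟩ : m = 0 ∧ n = 0 := Prod.mk.injEq m n 0 0 ▸ h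
    subst hm; subst hn
    simp only [ccorr, add_zero]
    exact Finset.sum_congr rfl fun k _ => Finset.sum_congr rfl fun l _ => mul_comm _ _
  · have h0 := hperf m n h
    have hsub : ccorr Av Ah m n - ccorr Ah Av m n = 0 := by
      apply cq_j_components (∑ k, ∑ l,
        (Ah k l * star (Ah (k + m) (l + n)) + Av k l * star (Av (k + m) (l + n))))
      rw [← h0]
      have hs : ccorr Av Ah m n - ccorr Ah Av m n
          = ∑ k, ∑ l, (Av k l * Ah (k + m) (l + n) - Ah k l * Av (k + m) (l + n)) := by
        simp [ccorr, Finset.sum_sub_distrib]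
      rw [hs]
      simp only [Rq, qcorr, hA, star_term, term, cq_add, cq_sum, Finset.sum_mul,
        Finset.sum_add_distrib]
    linear_combination hsub
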